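/- arXiv:0802.3487 — 4 statements merged into one kernel-verified Lean document; each statement's English description precedes it below -/
import Mathlib

section
/- Let σ be uniform on {1,…,k} and L a random variable with finitely many values on the same space, and set Xᵢ = P(σ = i | L). Then E[P(σ=1 | L) given σ = 1] - 1/k = E[∑_{i=1}^k (Xᵢ - 1/k)²] when the Xᵢ are exchangeable, and in particular E[X₁ | σ = 1] ≥ 1/k. -/
open MeasureTheory ProbabilityTheory

theorem stmt_7 {Ω S : Type*} [MeasurableSpace Ω] [MeasurableSpace S]
    [Fintype S] [MeasurableSingletonClass S]
    (μ : Measure Ω) [IsProbabilityMeasure μ]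
    (k : ℕ) (hk : 2 ≤ k) (σ : Ω → Fin k) (L : Ω → S)
    (hσ : Measurable σ) (hL : Measurable L)
    (huniform : ∀ i, μ (σ ⁻¹' {i}) = 1 / k)
    (X : Fin k → Ω → ℝ)
    (i₀ : Fin k) (hX : ∀ i ω, X i ω = (μ[|L ⁻¹' {L ω}] (σ ⁻¹' {i})).toReal)
    (hexch : ∀ π : Equiv.Perm (Fin k),
      Measure.map (fun ω (i : Fin k) => X (π i) ω) μ
        = Measure.map (fun ω (i : Fin k) => X i ω) μ) :
    (∫ ω, X i₀ ω ∂(μ[|σ ⁻¹' {i₀}])) - 1 / k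
        = ∫ ω, ∑ i, (X i ω - 1 / k) ^ 2 ∂μ
      ∧ 1 / (k : ℝ) ≤ ∫ ω, X i₀ ω ∂(μ[|σ ⁻¹' {i₀}]) := by
  have hkpos : 0 < k := lt_of_lt_of_le two_pos hk
  have hk0 : (k : ℝ) ≠ 0 := Nat.cast_ne_zero.mpr hkpos.ne'
  -- the factorisation through L
  set f : Fin k → S → ℝ := fun i s => (μ[|L ⁻¹' {s}] (σ ⁻¹' {i})).toReal with hfdef
  have hXf : ∀ i, X i = fun ω => f i (L ω) := fun i => funext fun ω => hX i ω
  have hfm : ∀ g : S → ℝ, Measurable g := fun g => measurable_of_countable g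
  have hXm : ∀ i, Measurable (X i) := by
    intro i; rw [hXf i]; exact (hfm (f i)).comp hL
  -- integrability of any function factoring through L
  have hint : ∀ g : S → ℝ, Integrable (fun ω => g (L ω)) μ := by
    intro g
    haveI : IsProbabilityMeasure (μ.map L) := Measure.isProbabilityMeasure_map hL.aemeasurable
    exact (integrable_map_measure (hfm g).aestronglyMeasurable hL.aemeasurable).mp
      (.of_finite)
  -- the key product formula
  have hkey : ∀ (i : Fin k) (s : S),
      (μ (L ⁻¹' {s} ∩ σ ⁻¹' {i})).toReal = f i s * (μ (L ⁻¹' {s})).toReal := by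
    intro i s
    have hms : MeasurableSet (L ⁻¹' {s}) := hL (measurableSet_singleton s)
    by_cases h0 : μ (L ⁻¹' {s}) = 0
    · have h1 : μ (L ⁻¹' {s} ∩ σ ⁻¹' {i}) = 0 :=
        measure_mono_null Set.inter_subset_left h0
      simp [h1, h0]
    · have hfin : μ (L ⁻¹' {s}) ≠ ⊤ := measure_ne_top μ _
      have ha : (μ (L ⁻¹' {s})).toReal ≠ 0 := ENNReal.toReal_ne_zero.mpr ⟨h0, hfin⟩
      simp only [hfdef, cond_apply hms, ENNReal.toReal_mul, ENNReal.toReal_inv]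
      field_simp
  -- pushforward computation
  have hpush : ∀ (g : S → ℝ) (ν : Measure Ω) (_ : IsFiniteMeasure ν),
      ∫ ω, g (L ω) ∂ν = ∑ s, (ν (L ⁻¹' {s})).toReal * g s := by
    intro g ν hν
    haveI := hν
    haveI : IsFiniteMeasure (ν.map L) := Measure.isFiniteMeasure_map ν L
    rw [← integral_map hL.aemeasurable (hfm g).aestronglyMeasurable,
      integral_fintype (.of_finite)]
    refine Finset.sum_congr rfl fun s _ => ?_
    rw [measureReal_def, Measure.map_apply hL (measurableSet_singleton s), smul_eq_mul]
  -- square integral of X i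
  have hB : ∀ i, ∫ ω, (X i ω) ^ 2 ∂μ = ∑ s, (μ (L ⁻¹' {s})).toReal * (f i s) ^ 2 := by
    intro i
    rw [hXf i]
    exact hpush (fun s => (f i s) ^ 2) μ inferInstance
  -- restricted integral of X i equals square integral
  have hA : ∀ i, ∫ ω in σ ⁻¹' {i}, X i ω ∂μ = ∫ ω, (X i ω) ^ 2 ∂μ := by
    intro i
    have hres : ∀ s : S, (μ.restrict (σ ⁻¹' {i})) (L ⁻¹' {s}) = μ (L ⁻¹' {s} ∩ σ ⁻¹' {i}) :=
      fun s => Measure.restrict_apply (hL (measurableSet_singleton s))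
    rw [hB i, hXf i, hpush (f i) (μ.restrict (σ ⁻¹' {i})) inferInstance]
    refine Finset.sum_congr rfl fun s _ => ?_
    rw [hres s, hkey i s]; ring
  -- exchangeability : all square integrals agree
  have hsq : ∀ i, ∫ ω, (X i ω) ^ 2 ∂μ = ∫ ω, (X i₀ ω) ^ 2 ∂μ := by
    intro i
    have hmF : Measurable (fun ω (j : Fin k) => X j ω) :=
      measurable_pi_lambda _ fun j => hXm j
    have hmFπ : Measurable (fun ω (j : Fin k) => X ((Equiv.swap i₀ i) j) ω) :=
      measurable_pi_lambda _ fun j => hXm _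
    have hg : Measurable (fun v : Fin k → ℝ => (v i₀) ^ 2) :=
      (measurable_pi_apply i₀).pow_const 2
    have h1 := hexch (Equiv.swap i₀ i)
    calc ∫ ω, (X i ω) ^ 2 ∂μ
        = ∫ ω, (fun v : Fin k → ℝ => (v i₀) ^ 2)
            ((fun ω (j : Fin k) => X ((Equiv.swap i₀ i) j) ω) ω) ∂μ := by
          simp [Equiv.swap_apply_left]
      _ = ∫ v, (v i₀) ^ 2 ∂(μ.map (fun ω (j : Fin k) => X ((Equiv.swap i₀ i) j) ω)) :=
          (integral_map hmFπ.aemeasurable hg.aestronglyMeasurable).symm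
      _ = ∫ v, (v i₀) ^ 2 ∂(μ.map (fun ω (j : Fin k) => X j ω)) := by rw [h1]
      _ = ∫ ω, (X i₀ ω) ^ 2 ∂μ := integral_map hmF.aemeasurable hg.aestronglyMeasurable
  -- sum of the X i is 1 a.e.
  have hsum_pt : ∀ ω, μ (L ⁻¹' {L ω}) ≠ 0 → ∑ i, X i ω = 1 := by
    intro ω h0
    haveI : IsProbabilityMeasure (μ[|L ⁻¹' {L ω}]) := cond_isProbabilityMeasure h0
    have hsum : ∑ i : Fin k, μ[|L ⁻¹' {L ω}] (σ ⁻¹' {i}) = 1 := by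
      rw [show (∑ i : Fin k, μ[|L ⁻¹' {L ω}] (σ ⁻¹' {i}))
          = μ[|L ⁻¹' {L ω}] (σ ⁻¹' ↑(Finset.univ : Finset (Fin k))) from
        sum_measure_preimage_singleton _ fun i _ => hσ (measurableSet_singleton i)]
      simp
    calc ∑ i, X i ω = ∑ i : Fin k, (μ[|L ⁻¹' {L ω}] (σ ⁻¹' {i})).toReal := by
          refine Finset.sum_congr rfl fun i _ => hX i ω
      _ = (∑ i : Fin k, μ[|L ⁻¹' {L ω}] (σ ⁻¹' {i})).toReal :=
          (ENNReal.toReal_sum fun i _ => measure_ne_top _ _).symm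
      _ = 1 := by rw [hsum]; simp
  have hsum1 : ∀ᵐ ω ∂μ, ∑ i, X i ω = 1 := by
    have hnull : μ {ω | μ (L ⁻¹' {L ω}) = 0} = 0 := by
      refine measure_mono_null (fun ω hω => ?_)
        ((measure_biUnion_null_iff (Set.to_countable {s : S | μ (L ⁻¹' {s}) = 0})).mpr
          fun s hs => hs)
      exact Set.mem_biUnion hω rfl
    rw [ae_iff]
    refine measure_mono_null (fun ω hω => ?_) hnull
    simp only [Set.mem_setOf_eq] at hω ⊢
    by_contra h
    exact hω (hsum_pt ω h)
  -- the pointwise expansion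
  have hminusae : ∀ᵐ ω ∂μ,
      ∑ i, (X i ω - 1 / k) ^ 2 = (∑ i, (X i ω) ^ 2) - 1 / k := by
    filter_upwards [hsum1] with ω hω
    have hexp : ∑ i : Fin k, (X i ω - 1 / k) ^ 2
        = (∑ i, (X i ω) ^ 2) - (2 / k) * (∑ i, X i ω) + k * (1 / k ^ 2) := by
      rw [Finset.mul_sum, ← Finset.sum_sub_distrib]
      rw [show ((k : ℝ) * (1 / k ^ 2)) = ∑ _i : Fin k, (1 / (k:ℝ) ^ 2) by
        simp [Finset.card_univ]]
      rw [← Finset.sum_add_distrib]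
      exact Finset.sum_congr rfl fun i _ => by ring
    rw [hexp, hω]
    field_simp
    ring
  -- integrability facts
  have hintsq : ∀ i, Integrable (fun ω => (X i ω) ^ 2) μ := by
    intro i; rw [hXf i]; exact hint (fun s => (f i s) ^ 2)
  have hRHS : ∫ ω, ∑ i, (X i ω - 1 / k) ^ 2 ∂μ = (∑ i, ∫ ω, (X i ω) ^ 2 ∂μ) - 1 / k := by
    rw [integral_congr_ae hminusae]
    rw [integral_sub (integrable_finset_sum _ fun i _ => hintsq i) (integrable_const _)]
    rw [integral_finset_sum _ fun i _ => hintsq i]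
    simp
  have hsqsum : (∑ i : Fin k, ∫ ω, (X i ω) ^ 2 ∂μ) = k * ∫ ω, (X i₀ ω) ^ 2 ∂μ := by
    rw [Finset.sum_congr rfl fun i _ => hsq i]
    simp [Finset.card_univ]
  -- the conditional integral
  have hcond : ∫ ω, X i₀ ω ∂(μ[|σ ⁻¹' {i₀}]) = k * ∫ ω in σ ⁻¹' {i₀}, X i₀ ω ∂μ := by
    simp only [ProbabilityTheory.cond, integral_smul_measure, huniform i₀]
    congr 1
    rw [one_div, inv_inv]
    simp
  have hmain : ∫ ω, X i₀ ω ∂(μ[|σ ⁻¹' {i₀}]) - 1 / k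
      = ∫ ω, ∑ i, (X i ω - 1 / k) ^ 2 ∂μ := by
    rw [hcond, hA i₀, hRHS, hsqsum]
  refine ⟨hmain, ?_⟩
  have hpos : 0 ≤ ∫ ω, ∑ i, (X i ω - 1 / k) ^ 2 ∂μ :=
    integral_nonneg fun ω => Finset.sum_nonneg fun i _ => sq_nonneg _
  linarith [hmain]
end

section
/- Let (b₁,…,b_k) be multinomial M(n,(1/k,…,1/k)) and let b̃₁,…,b̃_k be i.i.d. Poisson(D). There exists a coupling of these random vectors such that whenever ∑_j b̃_j ≥ n one has bᵢ ≤ b̃ᵢ for all i, and whenever ∑_j b̃_j ≤ n one has bᵢ ≥ b̃ᵢ for all i. -/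
open MeasureTheory ProbabilityTheory
open scoped NNReal ENNReal
set_option linter.unusedSectionVars false

section Aux
variable {k : ℕ} [NeZero k]

/-- count of balls in box `i` -/
def cnt {m : ℕ} (f : Fin m → Fin k) : Fin k → ℕ :=
  fun i => (Finset.univ.filter fun j => f j = i).card

lemma sum_cnt {m : ℕ} (f : Fin m → Fin k) : ∑ i, cnt f i = m := by
  have := Finset.card_eq_sum_card_fiberwise
    (f := f) (s := Finset.univ) (t := Finset.univ) (fun x _ => Finset.mem_univ _)
  simpa [cnt, Finset.card_univ] using this.symm

lemma cnt_comp_equiv {m : ℕ} (f : Fin m → Fin k) (σ : Equiv.Perm (Fin m)) :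
    cnt (f ∘ σ) = cnt f := by
  funext i
  exact Finset.card_bij' (fun j _ => σ j) (fun j _ => σ.symm j)
    (by simp [cnt]) (by simp [cnt]) (by simp) (by simp)

lemma card_fiber_eq {m : ℕ} (f : Fin m → Fin k) (i : Fin k) :
    Fintype.card {j // f j = i} = cnt f i := Fintype.card_subtype _

/-- fiber of `Sigma.fst` -/
def sigmaFstFiber {ι : Type*} {β : ι → Type*} (i : ι) :
    {p : Σ j, β j // p.1 = i} ≃ β i where
  toFun x := x.2 ▸ x.1.2
  invFun y := ⟨⟨i, y⟩, rfl⟩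
  left_inv := by rintro ⟨⟨j, y⟩, rfl⟩; rfl
  right_inv y := rfl

lemma exists_cnt_eq (a : Fin k → ℕ) : ∃ f : Fin (∑ i, a i) → Fin k, cnt f = a := by
  let e : (Σ i : Fin k, Fin (a i)) ≃ Fin (∑ i, a i) :=
    (Fintype.equivFin _).trans (finCongr (by simp))
  refine ⟨fun j => (e.symm j).1, funext fun i => ?_⟩
  rw [← card_fiber_eq]
  have e2 : {p : Σ i : Fin k, Fin (a i) // p.1 = i} ≃ {j // (e.symm j).1 = i} :=
    e.subtypeEquiv (fun p => by simp)
  rw [← Fintype.card_congr e2, Fintype.card_congr (sigmaFstFiber i), Fintype.card_fin]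

/-- permutations matching two functions with given fibers -/
def permFiberEquiv {m : ℕ} (f g : Fin m → Fin k) :
    {σ : Equiv.Perm (Fin m) // g ∘ ⇑σ = f} ≃ ∀ i, ({j // f j = i} ≃ {j // g j = i}) where
  toFun x i := x.1.subtypeEquiv fun j => by
    simp only [← x.2, Function.comp_apply]
  invFun e := ⟨Equiv.ofFiberEquiv e, funext fun j => Equiv.ofFiberEquiv_map e j⟩
  left_inv := by
    rintro ⟨σ, hσ⟩
    apply Subtype.ext
    apply Equiv.ext
    intro j
    simp [Equiv.ofFiberEquiv, Equiv.subtypeEquiv]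
  right_inv := by
    intro e
    funext i
    apply Equiv.ext
    rintro ⟨j, hj⟩
    subst hj
    apply Subtype.ext
    simp only [Equiv.ofFiberEquiv, Equiv.subtypeEquiv, Equiv.trans_apply,
      Equiv.sigmaCongrRight_apply, Equiv.coe_fn_mk]
    rfl

lemma card_cnt_filter_mul (m : ℕ) (a : Fin k → ℕ) (ha : ∑ i, a i = m) :
    (Finset.univ.filter fun f : Fin m → Fin k => cnt f = a).card * ∏ i, (a i).factorial
      = m.factorial := by
  subst ha
  obtain ⟨g, hg⟩ := exists_cnt_eq a
  have key : ∀ f : Fin (∑ i, a i) → Fin k, cnt f = a →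
      (Finset.univ.filter fun σ : Equiv.Perm (Fin (∑ i, a i)) => g ∘ ⇑σ = f).card
        = ∏ i, (a i).factorial := by
    intro f hf
    rw [← Fintype.card_subtype, Fintype.card_congr (permFiberEquiv f g), Fintype.card_pi]
    refine Finset.prod_congr rfl fun i _ => ?_
    rw [Fintype.card_equiv (Fintype.equivOfCardEq
      (by rw [card_fiber_eq, card_fiber_eq, hf, hg]))]
    rw [card_fiber_eq, hf]
  have h2 := Finset.card_eq_sum_card_fiberwise
      (f := fun σ : Equiv.Perm (Fin (∑ i, a i)) => g ∘ ⇑σ)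
      (s := Finset.univ) (t := Finset.univ.filter fun f => cnt f = a)
      (fun σ _ => by simp [cnt_comp_equiv, hg])
  rw [Finset.card_univ, Fintype.card_perm, Fintype.card_fin] at h2
  rw [h2]
  rw [Finset.sum_congr rfl (fun f hf => key f (Finset.mem_filter.mp hf).2),
    Finset.sum_const, smul_eq_mul]


variable {k : ℕ} [NeZero k]


def restr {M N : ℕ} (h : N ≤ M) (f : Fin M → Fin k) : Fin N → Fin k := f ∘ Fin.castLE h

def finLtEquiv {M N : ℕ} (h : N ≤ M) : {j : Fin M // j.1 < N} ≃ Fin N where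
  toFun x := ⟨x.1.1, x.2⟩
  invFun j := ⟨⟨j.1, lt_of_lt_of_le j.2 h⟩, j.2⟩
  left_inv x := Subtype.ext (Fin.ext rfl)
  right_inv j := rfl

def restrFiberEquiv {M N : ℕ} (h : N ≤ M) (b : Fin N → Fin k) :
    {f : Fin M → Fin k // restr h f = b} ≃ ({j : Fin M // ¬ j.1 < N} → Fin k) where
  toFun x j := x.1 j.1
  invFun g := ⟨fun j => if hj : j.1 < N then b ⟨j.1, hj⟩ else g ⟨j, hj⟩, by
    funext j'
    have hj' : (Fin.castLE h j').1 < N := j'.2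
    simp only [restr, Function.comp_apply, hj', dif_pos]
    exact congrArg b (Fin.ext rfl)⟩
  left_inv x := by
    apply Subtype.ext; funext j; dsimp only; split_ifs with hj
    · rw [← congrFun x.2 ⟨j.1, hj⟩]
      simp only [restr, Function.comp_apply]
      exact congrArg x.1 (Fin.ext rfl)
    · rfl
  right_inv g := by
    funext j; dsimp only; rw [dif_neg j.2]

lemma card_restr_fiber {M N : ℕ} (h : N ≤ M) (b : Fin N → Fin k) :
    Fintype.card {f : Fin M → Fin k // restr h f = b} = k ^ (M - N) := by
  rw [Fintype.card_congr (restrFiberEquiv h b), Fintype.card_fun, Fintype.card_fin]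
  congr 1
  have : Fintype.card {j : Fin M // j.1 < N} = N := by
    rw [Fintype.card_congr (finLtEquiv h), Fintype.card_fin]
  have h2 := Fintype.card_subtype_compl (fun j : Fin M => j.1 < N)
  rw [this, Fintype.card_fin] at h2
  exact h2

noncomputable def unif (k M : ℕ) [NeZero k] : Measure (Fin M → Fin k) :=
  (PMF.uniformOfFintype (Fin M → Fin k)).toMeasure

instance (M : ℕ) : IsProbabilityMeasure (unif k M) :=
  PMF.toMeasure.isProbabilityMeasure _

lemma unif_preimage {M : ℕ} {β : Type*} [DecidableEq β] (g : (Fin M → Fin k) → β) (x : β)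
    [MeasurableSpace β] :
    unif k M (g ⁻¹' {x})
      = (Finset.univ.filter fun f => g f = x).card * ((k : ℝ≥0∞) ^ M)⁻¹ := by
  rw [unif, PMF.toMeasure_apply_fintype]
  have : ∀ f : Fin M → Fin k,
      (g ⁻¹' {x}).indicator (⇑(PMF.uniformOfFintype (Fin M → Fin k))) f
        = if g f = x then ((k : ℝ≥0∞) ^ M)⁻¹ else 0 := by
    intro f
    by_cases hf : g f = x <;>
      simp [Set.indicator, hf, PMF.uniformOfFintype_apply, Fintype.card_fun, Fintype.card_fin]
  rw [Finset.sum_congr rfl fun f _ => this f, Finset.sum_ite, Finset.sum_const_zero,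
    add_zero, Finset.sum_const, nsmul_eq_mul]

lemma pow_cancel_inv {c N M : ℕ} (hc : c * k ^ N = k ^ M) :
    (c : ℝ≥0∞) * ((k : ℝ≥0∞) ^ M)⁻¹ = ((k : ℝ≥0∞) ^ N)⁻¹ := by
  have hk0 : ((k : ℝ≥0∞)) ≠ 0 := by exact_mod_cast (NeZero.ne k)
  have hkt : ((k : ℝ≥0∞)) ≠ ∞ := ENNReal.natCast_ne_top k
  have hcast : (c : ℝ≥0∞) * (k : ℝ≥0∞) ^ N = (k : ℝ≥0∞) ^ M := by
    exact_mod_cast congrArg (Nat.cast (R := ℝ≥0∞)) hc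
  rw [← hcast, ENNReal.mul_inv (Or.inr (ENNReal.pow_ne_top hkt)) (Or.inr (pow_ne_zero _ hk0)),
    ← mul_assoc]
  rcases eq_or_ne (c : ℝ≥0∞) 0 with h0 | h0
  · exfalso
    rw [h0, zero_mul] at hcast
    exact (pow_ne_zero M hk0) hcast.symm
  rw [ENNReal.mul_inv_cancel h0 (ENNReal.natCast_ne_top c), one_mul]

lemma pow_cancel_inv' {N M : ℕ} (h : N ≤ M) :
    ((k:ℝ≥0∞)) ^ (M - N) * (((k:ℝ≥0∞)) ^ M)⁻¹ = (((k:ℝ≥0∞)) ^ N)⁻¹ := by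
  have hk0 : ((k : ℝ≥0∞)) ≠ 0 := by exact_mod_cast (NeZero.ne k)
  have hkt : ((k : ℝ≥0∞)) ≠ ∞ := ENNReal.natCast_ne_top k
  rw [show ((k:ℝ≥0∞))^M = (k:ℝ≥0∞)^(M-N) * (k:ℝ≥0∞)^N by
    rw [← pow_add, Nat.sub_add_cancel h]]
  rw [ENNReal.mul_inv (Or.inr (ENNReal.pow_ne_top hkt)) (Or.inr (pow_ne_zero _ hk0)),
    ← mul_assoc, ENNReal.mul_inv_cancel (pow_ne_zero _ hk0) (ENNReal.pow_ne_top hkt), one_mul]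


lemma map_restr {M N : ℕ} (h : N ≤ M) :
    (unif k M).map (restr h) = unif k N := by
  apply MeasureTheory.Measure.ext_of_singleton
  intro b
  rw [Measure.map_apply Measurable.of_discrete (measurableSet_singleton b),
    unif_preimage (restr h) b]
  have hcard : (Finset.univ.filter fun f => restr h f = b).card = k ^ (M - N) := by
    rw [← Fintype.card_subtype, card_restr_fiber h b]
  rw [hcard, unif, PMF.toMeasure_apply_singleton _ _ (measurableSet_singleton _),
    PMF.uniformOfFintype_apply, Fintype.card_fun]
  simp only [Fintype.card_fin, Nat.cast_pow]
  exact pow_cancel_inv' h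

lemma map_cnt_singleton (m : ℕ) (a : Fin k → ℕ) :
    (unif k m).map cnt {a}
      = (Finset.univ.filter fun f : Fin m → Fin k => cnt f = a).card * ((k:ℝ≥0∞)^m)⁻¹ := by
  rw [Measure.map_apply Measurable.of_discrete (measurableSet_singleton a)]
  exact unif_preimage cnt a

lemma map_sum' {α β : Type*} [MeasurableSpace α] [MeasurableSpace β] {g : α → β}
    (hg : Measurable g) (W : ℕ → Measure α) :
    (Measure.sum W).map g = Measure.sum (fun m => (W m).map g) := by
  apply Measure.ext; intro s hs
  rw [Measure.map_apply hg hs, Measure.sum_apply _ hs, Measure.sum_apply _ (hg hs)]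
  exact tsum_congr fun m => (Measure.map_apply hg hs).symm

lemma sum_smul_collapse {α : Type*} [MeasurableSpace α] {w : ℕ → ℝ≥0∞} (hw : ∑' m, w m = 1)
    (ν : Measure α) : Measure.sum (fun m => w m • ν) = ν := by
  apply Measure.ext; intro s hs
  rw [Measure.sum_apply _ hs]
  simp only [Measure.smul_apply, smul_eq_mul]
  rw [ENNReal.tsum_mul_right, hw, one_mul]

lemma poisson_singleton (r : ℝ≥0) (j : ℕ) :
    poissonMeasure r {j} = ENNReal.ofReal (Real.exp (-(r:ℝ)) * (r:ℝ) ^ j / j.factorial) := by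
  exact poissonMeasure_singleton r j

lemma pi_poisson_singleton (D : ℝ≥0) (a : Fin k → ℕ) :
    Measure.pi (fun _ : Fin k => poissonMeasure D) {a} = ∏ i, poissonMeasure D {a i} := by
  rw [show ({a} : Set (Fin k → ℕ)) = Set.pi Set.univ (fun i => {a i}) from
    (Set.univ_pi_singleton a).symm, Measure.pi_pi]

lemma poissonization (D : ℝ≥0) :
    Measure.sum (fun m => (poissonPMF ((k:ℝ≥0) * D) m : ℝ≥0∞) • (unif k m).map cnt)
      = Measure.pi (fun _ : Fin k => poissonMeasure D) := by
  have hk0 : (0:ℝ) < (k:ℝ) := by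
    exact_mod_cast Nat.pos_of_ne_zero (NeZero.ne k)
  apply MeasureTheory.Measure.ext_of_singleton
  intro a
  rw [Measure.sum_apply _ (measurableSet_singleton a), pi_poisson_singleton]
  simp only [Measure.smul_apply, smul_eq_mul]
  rw [tsum_eq_single (∑ i, a i) (by
    intro m hm
    rw [map_cnt_singleton]
    have : (Finset.univ.filter fun f : Fin m → Fin k => cnt f = a) = ∅ := by
      rw [Finset.filter_eq_empty_iff]
      intro f _ hf
      exact hm (hf ▸ sum_cnt f).symm
    simp [this])]
  rw [map_cnt_singleton]
  set m := ∑ i, a i with hm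
  have hC := card_cnt_filter_mul m a rfl
  set C := (Finset.univ.filter fun f : Fin m → Fin k => cnt f = a).card with hCdef
  -- rewrite everything as ENNReal.ofReal
  have h1 : ((C:ℕ) : ℝ≥0∞) = ENNReal.ofReal (C : ℝ) := (ENNReal.ofReal_natCast C).symm
  have h2 : (((k:ℝ≥0∞))^m)⁻¹ = ENNReal.ofReal (((k:ℝ)^m)⁻¹) := by
    rw [ENNReal.ofReal_inv_of_pos (pow_pos hk0 m), ENNReal.ofReal_pow hk0.le,
      ENNReal.ofReal_natCast]
  have h3 : ((poissonPMF ((k:ℝ≥0) * D)) m : ℝ≥0∞)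
      = ENNReal.ofReal (poissonPMFReal ((k:ℝ≥0) * D) m) := rfl
  rw [h1, h2, h3]
  rw [Finset.prod_congr rfl (fun i _ => poisson_singleton D (a i)),
    ← ENNReal.ofReal_prod_of_nonneg (fun i _ => by positivity)]
  rw [← ENNReal.ofReal_mul (by positivity : (0:ℝ) ≤ (C:ℝ)),
    ← ENNReal.ofReal_mul poissonPMFReal_nonneg]
  congr 1
  have hCr : (C:ℝ) * ∏ i, ((a i).factorial : ℝ) = (m.factorial : ℝ) := by
    exact_mod_cast congrArg (Nat.cast (R := ℝ)) hC
  have hrt : ((((k:ℝ≥0) * D) : ℝ≥0) : ℝ) = (k:ℝ) * (D:ℝ) := by push_cast; ring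
  rw [poissonPMFReal, hrt,
    show (-((k:ℝ) * (D:ℝ))) = (k:ℕ) * (-(D:ℝ)) by push_cast; ring, Real.exp_nat_mul]
  rw [Finset.prod_div_distrib, Finset.prod_mul_distrib, Finset.prod_const,
    Finset.prod_pow_eq_pow_sum, Finset.card_univ, Fintype.card_fin, ← hm, mul_pow]
  have hfac : (m.factorial : ℝ) ≠ 0 := Nat.cast_ne_zero.mpr m.factorial_ne_zero
  have hprod : (∏ i, ((a i).factorial :ℝ)) ≠ 0 := by positivity
  have hkm : ((k:ℝ))^m ≠ 0 := by positivity
  field_simp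
  linear_combination (D:ℝ)^m * hCr


lemma cnt_restr_le {M N N' : ℕ} (hN : N ≤ M) (hN' : N' ≤ M) (hNN' : N ≤ N')
    (f : Fin M → Fin k) (i : Fin k) :
    cnt (restr hN f) i ≤ cnt (restr hN' f) i := by
  apply Finset.card_le_card_of_injOn (fun j => Fin.castLE hNN' j)
  · intro j hj
    have hj' := (Finset.mem_filter.mp (Finset.mem_coe.mp hj)).2
    refine Finset.mem_coe.mpr (Finset.mem_filter.mpr ⟨Finset.mem_univ _, ?_⟩)
    rw [← hj']
    exact congrArg f (Fin.ext rfl)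
  · intro j1 _ j2 _ hj
    exact Fin.castLE_injective hNN' hj

def pairCnt (n m : ℕ) (f : Fin (max m n) → Fin k) : (Fin k → ℕ) × (Fin k → ℕ) :=
  (cnt (restr (le_max_right m n) f), cnt (restr (le_max_left m n) f))

end Aux

/-- The multinomial distribution `M(n, (1/k, …, 1/k))`: the law of the vector of counts
of `n` balls placed independently and uniformly at random into `k` boxes. -/
noncomputable def multinomialUniform (n k : ℕ) [NeZero k] : Measure (Fin k → ℕ) :=
  Measure.map (fun f i => (Finset.univ.filter fun j : Fin n => f j = i).card)
    (PMF.uniformOfFintype (Fin n → Fin k)).toMeasure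

theorem stmt_10 (k : ℕ) [NeZero k] (n : ℕ) (D : ℝ≥0) (hD : 0 < D) :
    ∃ (Ω : Type) (_ : MeasurableSpace Ω) (μ : Measure Ω) (_ : IsProbabilityMeasure μ)
      (b bt : Ω → Fin k → ℕ),
      Measurable b ∧ Measurable bt ∧
      Measure.map b μ = multinomialUniform n k ∧
      Measure.map bt μ = Measure.pi (fun _ : Fin k => poissonMeasure D) ∧
      ∀ᵐ ω ∂μ,
        ((n ≤ ∑ j, bt ω j → ∀ i, b ω i ≤ bt ω i) ∧
         (∑ j, bt ω j ≤ n → ∀ i, bt ω i ≤ b ω i)) := by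
  classical
  set w : ℕ → ℝ≥0∞ := fun m => poissonPMF ((k:ℝ≥0) * D) m with hwdef
  set μ : Measure ((Fin k → ℕ) × (Fin k → ℕ)) :=
    Measure.sum (fun m => w m • ((unif k (max m n)).map (pairCnt n m))) with hμ
  have hw : ∑' m, w m = 1 := (poissonPMF _).tsum_coe
  have hFmeas : ∀ m, Measurable (pairCnt (k := k) n m) := fun m => Measurable.of_discrete
  have hterm : ∀ m, ((unif k (max m n)).map (pairCnt n m)) Set.univ = 1 := fun m => by
    rw [Measure.map_apply (hFmeas m) MeasurableSet.univ, Set.preimage_univ]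
    exact measure_univ
  have hprob : IsProbabilityMeasure μ := by
    constructor
    rw [hμ, Measure.sum_apply _ MeasurableSet.univ]
    simp only [Measure.smul_apply, smul_eq_mul]
    rw [tsum_congr (fun m => by rw [hterm m, mul_one])]
    exact hw
  have hb : μ.map Prod.fst = multinomialUniform n k := by
    rw [hμ, map_sum' measurable_fst]
    have he : (fun m => ((w m • ((unif k (max m n)).map (pairCnt n m))).map Prod.fst))
        = fun m => w m • ((unif k n).map cnt) := by
      funext m
      rw [Measure.map_smul, Measure.map_map measurable_fst (hFmeas m),
        show (Prod.fst ∘ pairCnt (k := k) n m) = cnt ∘ (restr (le_max_right m n)) from rfl,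
        ← Measure.map_map Measurable.of_discrete Measurable.of_discrete,
        map_restr (le_max_right m n)]
    rw [he, sum_smul_collapse hw]
    rfl
  have hbt : μ.map Prod.snd = Measure.pi (fun _ : Fin k => poissonMeasure D) := by
    rw [hμ, map_sum' measurable_snd]
    have he : (fun m => ((w m • ((unif k (max m n)).map (pairCnt n m))).map Prod.snd))
        = fun m => w m • ((unif k m).map cnt) := by
      funext m
      rw [Measure.map_smul, Measure.map_map measurable_snd (hFmeas m),
        show (Prod.snd ∘ pairCnt (k := k) n m) = cnt ∘ (restr (le_max_left m n)) from rfl,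
        ← Measure.map_map Measurable.of_discrete Measurable.of_discrete,
        map_restr (le_max_left m n)]
    rw [he]
    exact poissonization D
  refine ⟨(Fin k → ℕ) × (Fin k → ℕ), inferInstance, μ, hprob, Prod.fst, Prod.snd,
    measurable_fst, measurable_snd, hb, hbt, ?_⟩
  rw [ae_iff, hμ, Measure.sum_apply _ MeasurableSet.of_discrete]
  have hz : ∀ m : ℕ, ((unif k (max m n)).map (pairCnt n m))
      {ω : (Fin k → ℕ) × (Fin k → ℕ) | ¬ ((n ≤ ∑ j, ω.2 j → ∀ i, ω.1 i ≤ ω.2 i) ∧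
        (∑ j, ω.2 j ≤ n → ∀ i, ω.2 i ≤ ω.1 i))} = 0 := by
    intro m
    rw [Measure.map_apply (hFmeas m) MeasurableSet.of_discrete]
    have hemp : (pairCnt (k := k) n m) ⁻¹'
        {ω : (Fin k → ℕ) × (Fin k → ℕ) | ¬ ((n ≤ ∑ j, ω.2 j → ∀ i, ω.1 i ≤ ω.2 i) ∧
          (∑ j, ω.2 j ≤ n → ∀ i, ω.2 i ≤ ω.1 i))} = ∅ := by
      rw [Set.eq_empty_iff_forall_notMem]
      intro f hf
      simp only [Set.mem_preimage, Set.mem_setOf_eq, pairCnt] at hf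
      apply hf
      have hsum : ∑ j, cnt (restr (le_max_left m n) f) j = m := sum_cnt _
      rw [hsum]
      constructor
      · intro hn i
        exact cnt_restr_le (le_max_right m n) (le_max_left m n) hn f i
      · intro hle i
        exact cnt_restr_le (le_max_left m n) (le_max_right m n) hle f i
    rw [hemp]
    exact measure_empty
  simp only [Measure.smul_apply, smul_eq_mul]
  rw [tsum_congr (fun m => by rw [hz m, mul_zero])]
  exact tsum_zero
end

section
/- Let β* < 1 - log 2, and for each integer k ≥ 2 set D = D(k) = log k + log log k + β*. Suppose p = p(k) satisfies k·p(k) → 0. Define a sequence by y₀ = 1 and y_{n+1} = g(y_n) where g(y) = p + (1 - exp(-(k-1)·exp(-yD)))/((k-1)·exp(-yD)). Then for all sufficiently large k, limsup_n y_n < 2/k. -/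
open Filter Real Set

lemma aux_exp_ineq (x : ℝ) (hx : 0 ≤ x) : 2 - x ≤ (2 + x) * Real.exp (-x) := by
  have hderiv : ∀ t : ℝ, HasDerivAt (fun t : ℝ => (2 + t) * Real.exp (-t) + t)
      ((0 + 1) * Real.exp (-t) + (2 + t) * (Real.exp (-t) * (-1)) + 1) t := by
    intro t
    have h1 : HasDerivAt (fun t : ℝ => 2 + t) (0 + 1) t :=
      (hasDerivAt_const t 2).add (hasDerivAt_id t)
    have h2 : HasDerivAt (fun t : ℝ => Real.exp (-t)) (Real.exp (-t) * (-1)) t := by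
      have := (Real.hasDerivAt_exp (-t)).comp t ((hasDerivAt_id t).neg)
      simpa [Function.comp_def] using this
    exact (h1.mul h2).add (hasDerivAt_id t)
  have key : MonotoneOn (fun t : ℝ => (2 + t) * Real.exp (-t) + t) (Set.Ici 0) := by
    apply monotoneOn_of_deriv_nonneg (convex_Ici 0)
    · exact Continuous.continuousOn (by continuity)
    · intro t _; exact (hderiv t).differentiableAt.differentiableWithinAt
    · intro t _
      rw [(hderiv t).deriv]
      have h3 := Real.add_one_le_exp t
      have h4 : Real.exp (-t) * Real.exp t = 1 := by rw [← Real.exp_add]; simp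
      have h5 := Real.exp_pos (-t)
      nlinarith
  have h0 : (fun t : ℝ => (2 + t) * Real.exp (-t) + t) 0 ≤
      (fun t : ℝ => (2 + t) * Real.exp (-t) + t) x :=
    key (Set.self_mem_Ici) hx hx
  simp only [neg_zero, Real.exp_zero] at h0
  linarith [h0]

lemma aux_f_le (x : ℝ) (hx : 0 < x) : (1 - Real.exp (-x)) / x ≤ 2 / (2 + x) := by
  rw [div_le_div_iff₀ hx (by linarith)]
  nlinarith [aux_exp_ineq x hx.le]

lemma aux_et (t : ℝ) : Real.exp 1 * t ≤ Real.exp t := by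
  have h := Real.add_one_le_exp (t - 1)
  have h2 : Real.exp t = Real.exp (t - 1) * Real.exp 1 := by
    rw [← Real.exp_add]; ring_nf
  nlinarith [Real.exp_pos 1, Real.exp_pos (t-1)]

lemma aux_interp (d u v yy : ℝ) (huv : u < v) (hy1 : u ≤ yy) (hy2 : yy ≤ v) :
    Real.exp (yy * d) ≤ ((v - yy) / (v - u)) * Real.exp (u * d)
      + ((yy - u) / (v - u)) * Real.exp (v * d) := by
  have hvu : 0 < v - u := by linarith
  have ha : (0:ℝ) ≤ (v - yy) / (v - u) := div_nonneg (by linarith) hvu.le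
  have hb : (0:ℝ) ≤ (yy - u) / (v - u) := div_nonneg (by linarith) hvu.le
  have hab : (v - yy) / (v - u) + (yy - u) / (v - u) = 1 := by field_simp; ring
  have h := convexOn_exp.2 (Set.mem_univ (u * d)) (Set.mem_univ (v * d)) ha hb hab
  have harg : ((v - yy) / (v - u)) • (u * d) + ((yy - u) / (v - u)) • (v * d) = yy * d := by
    simp only [smul_eq_mul]
    field_simp
    ring
  rw [harg] at h
  simpa using h

lemma core_fd (K d z : ℝ) (hK1 : 0 < K - 1) :
    (1 - Real.exp (-((K-1) * Real.exp (-(z*d))))) / ((K-1) * Real.exp (-(z*d)))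
      ≤ Real.exp (z*d) / (K-1) := by
  have hx : 0 < (K-1) * Real.exp (-(z*d)) := mul_pos hK1 (Real.exp_pos _)
  rw [div_le_div_iff₀ hx hK1]
  have hee : Real.exp (z*d) * ((K - 1) * Real.exp (-(z*d))) = K - 1 := by
    rw [show Real.exp (z*d) * ((K - 1) * Real.exp (-(z*d)))
      = (K-1) * (Real.exp (z*d) * Real.exp (-(z*d))) by ring, ← Real.exp_add]
    simp
  rw [hee]
  have hxe := Real.exp_pos (-((K - 1) * Real.exp (-(z * d))))
  linarith [mul_pos hK1 hxe]

lemma core_nonneg (K d z P : ℝ) (hK1 : 0 < K - 1) (hP0 : 0 ≤ P) :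
    0 ≤ P + (1 - Real.exp (-((K-1) * Real.exp (-(z*d))))) / ((K-1) * Real.exp (-(z*d))) := by
  have hx : 0 < (K-1) * Real.exp (-(z*d)) := mul_pos hK1 (Real.exp_pos _)
  have he1 : Real.exp (-((K - 1) * Real.exp (-(z * d)))) ≤ 1 :=
    Real.exp_le_one_iff.2 (by linarith)
  have hd := div_nonneg (by linarith :
    (0:ℝ) ≤ 1 - Real.exp (-((K-1)*Real.exp (-(z*d))))) hx.le
  linarith

lemma core_G1 (K d P : ℝ) (hK : 8 ≤ K) (hd : 0 < d) (hP0 : 0 ≤ P) (hP8 : P ≤ 1/(8*K))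
    (hexp : Real.exp (2/K * d) ≤ 5/4) (z : ℝ) (hz0 : 0 ≤ z) (hz2 : z ≤ 2/K) :
    P + (1 - Real.exp (-((K-1) * Real.exp (-(z*d))))) / ((K-1) * Real.exp (-(z*d)))
      ≤ 9/(5*K) := by
  have hK0 : (0:ℝ) < K := by linarith
  have hK1 : (0:ℝ) < K - 1 := by linarith
  have h1 := core_fd K d z hK1
  have h2 : Real.exp (z * d) ≤ Real.exp (2/K * d) := by
    apply Real.exp_le_exp.2
    have hm1 := mul_le_mul_of_nonneg_right hz2 hd.le
    linarith [hm1]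
  have h4 : Real.exp (z * d) / (K - 1) ≤ (5/4) / (K-1) := by gcongr; linarith
  have h5 : (5/4 : ℝ)/(K-1) ≤ 67/(40*K) := by
    rw [div_le_div_iff₀ hK1 (by linarith)]
    linarith
  have h6 : (67:ℝ)/(40*K) = 9/(5*K) - 1/(8*K) := by
    field_simp
    ring
  linarith

lemma core_G2mid (K d P a : ℝ) (hK : 8 ≤ K) (hd : 0 < d) (hP0 : 0 ≤ P) (hP8 : P ≤ 1/(8*K))
    (ha2 : 1/2 ≤ a) (ha1 : a < 1)
    (hexpu : Real.exp (2/K * d) ≤ 5/4) (hexpv : Real.exp (a * d) ≤ 7/16 * a * K)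
    (z : ℝ) (hz1 : 2/K ≤ z) (hza : z ≤ a) :
    P + (1 - Real.exp (-((K-1) * Real.exp (-(z*d))))) / ((K-1) * Real.exp (-(z*d)))
      ≤ z - 1/K^2 := by
  have hK0 : (0:ℝ) < K := by linarith
  have hK1 : (0:ℝ) < K - 1 := by linarith
  have ha0 : (0:ℝ) < a := by linarith
  have h2K : 2/K ≤ 1/4 := by rw [div_le_iff₀ hK0]; linarith
  have hKK2 : 1/K^2 ≤ 1/(8*K) := by
    rw [div_le_div_iff₀ (by positivity) (by linarith)]
    linarith [mul_le_mul_of_nonneg_right hK hK0.le]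
  have huv : 2/K < a := by linarith
  have hinterp := aux_interp d (2/K) a z huv hz1 hza
  have hu : Real.exp (2/K * d) ≤ 7/8 * (K-1) * (2/K) := by
    have h4 : (5/4:ℝ) ≤ 7/8 * (K-1) * (2/K) := by
      rw [show (7:ℝ)/8 * (K-1) * (2/K) = 7*(K-1)/(4*K) by ring, le_div_iff₀ (by linarith)]
      linarith
    linarith
  have hv : Real.exp (a * d) ≤ 7/8 * (K-1) * a := by
    have hm : a*2 ≤ a*K := mul_le_mul_of_nonneg_left (by linarith) ha0.le
    nlinarith [hexpv, hm]
  have hden : 0 < a - 2/K := by linarith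
  have hcomb : Real.exp (z*d) ≤ 7/8*(K-1)*z := by
    have h0 := mul_le_mul_of_nonneg_right hinterp hden.le
    have ht : (a - z)/(a - 2/K) * (a - 2/K) = a - z := div_mul_cancel₀ _ hden.ne'
    have hs : (z - 2/K)/(a - 2/K) * (a - 2/K) = z - 2/K := div_mul_cancel₀ _ hden.ne'
    have hexp1 : ((a - z)/(a - 2/K) * Real.exp (2/K*d)
        + (z - 2/K)/(a - 2/K) * Real.exp (a*d)) * (a - 2/K)
        = (a - z) * Real.exp (2/K*d) + (z - 2/K) * Real.exp (a*d) := by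
      rw [add_mul, mul_right_comm, ht, mul_right_comm ((z - 2/K)/(a - 2/K)), hs]
    have hb1 : (a - z) * Real.exp (2/K*d) ≤ (a - z) * (7/8*(K-1)*(2/K)) :=
      mul_le_mul_of_nonneg_left hu (by linarith)
    have hb2 : (z - 2/K) * Real.exp (a*d) ≤ (z - 2/K) * (7/8*(K-1)*a) :=
      mul_le_mul_of_nonneg_left hv (by linarith)
    have hring : (a - z) * (7/8*(K-1)*(2/K)) + (z - 2/K) * (7/8*(K-1)*a)
        = (7/8*(K-1)*z) * (a - 2/K) := by
      field_simp [hK0.ne']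
      ring
    have hfin : Real.exp (z*d) * (a - 2/K) ≤ (7/8*(K-1)*z) * (a-2/K) := by
      calc Real.exp (z*d) * (a-2/K)
          ≤ ((a - z)/(a - 2/K) * Real.exp (2/K*d)
            + (z - 2/K)/(a - 2/K) * Real.exp (a*d)) * (a - 2/K) := h0
        _ = (a - z) * Real.exp (2/K*d) + (z - 2/K) * Real.exp (a*d) := hexp1
        _ ≤ (a - z) * (7/8*(K-1)*(2/K)) + (z - 2/K) * (7/8*(K-1)*a) := by linarith
        _ = (7/8*(K-1)*z) * (a - 2/K) := hring
    exact le_of_mul_le_mul_right hfin hden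
  have h1 := core_fd K d z hK1
  have h2 : Real.exp (z*d)/(K-1) ≤ 7/8*z := by
    rw [div_le_iff₀ hK1]
    nlinarith [hcomb]
  have h3 : 1/(8*K) + 1/(8*K) = (2/K)/8 := by ring
  linarith

set_option maxHeartbeats 1000000 in
lemma core_G2high (K d P a σ E L β : ℝ) (hK : 8 ≤ K) (hL1 : 1 ≤ L)
    (hdge : L ≤ d) (hdle : d ≤ 2*L)
    (hP0 : 0 ≤ P) (hP8 : P ≤ 1/(8*K))
    (ha2 : 1/2 ≤ a) (ha1 : a < 1) (hσ : 0 < σ) (hE0 : 0 < E)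
    (haE : a * E = 2 + σ)
    (hEe : Real.exp (-β) * Real.exp 1 = E)
    (hexpd : Real.exp (-d) = Real.exp (-β) / (K * L))
    (hrl : 12 ≤ a * Real.exp (-β) * L)
    (hLK : L^2 ≤ K) (hLKσ : 2*L^2 ≤ K*σ)
    (h7 : 2*(2+σ) ≤ σ*K) (h8 : 4*E ≤ σ*K)
    (z : ℝ) (hza : a ≤ z) (hz2 : z ≤ 1) :
    P + (1 - Real.exp (-((K-1) * Real.exp (-(z*d))))) / ((K-1) * Real.exp (-(z*d)))
      ≤ z - 1/K^2 := by
  have hK0 : (0:ℝ) < K := by linarith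
  have hK1 : (0:ℝ) < K - 1 := by linarith
  have ha0 : (0:ℝ) < a := by linarith
  have hL0 : (0:ℝ) < L := by linarith
  have hd0 : (0:ℝ) < d := by linarith
  have hKK2 : 1/K^2 ≤ 1/(8*K) := by
    rw [div_le_div_iff₀ (by positivity) (by linarith)]
    linarith [mul_le_mul_of_nonneg_right hK hK0.le]
  obtain ⟨x, hxdef⟩ : ∃ x : ℝ, x = (K - 1) * Real.exp (-(z * d)) := ⟨_, rfl⟩
  rw [← hxdef]
  have hx : 0 < x := by rw [hxdef]; exact mul_pos hK1 (Real.exp_pos _)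
  obtain ⟨q, hqdef⟩ : ∃ q : ℝ, q = P + 1/K^2 := ⟨_, rfl⟩
  have hq0 : 0 < q := by
    have h1 : (0:ℝ) < 1/K^2 := by positivity
    rw [hqdef]; linarith
  have hq4 : q ≤ 1/(4*K) := by
    rw [hqdef, show (1:ℝ)/(4*K) = 1/(8*K) + 1/(8*K) by ring]
    linarith
  have hK4 : 1/(4*K) ≤ 1/4 := by
    rw [div_le_div_iff₀ (by linarith) (by norm_num)]
    linarith
  have hzq : a/2 ≤ z - q := by linarith
  have hzq0 : 0 < z - q := by linarith
  obtain ⟨A, hAdef⟩ : ∃ A : ℝ, A = (K - 1) * Real.exp (-d) := ⟨_, rfl⟩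
  have hA0 : 0 < A := by rw [hAdef]; exact mul_pos hK1 (Real.exp_pos _)
  have hxA : A ≤ x := by
    rw [hAdef, hxdef]
    have h1 : Real.exp (-d) ≤ Real.exp (-(z*d)) := by
      apply Real.exp_le_exp.2
      have hm2 := mul_le_mul_of_nonneg_right hz2 hd0.le
      linarith [hm2]
    exact mul_le_mul_of_nonneg_left h1 hK1.le
  have hAval : A = (K-1) * Real.exp (-β) / (K*L) := by
    rw [hAdef, hexpd]; ring
  have hALb : Real.exp (-β) / (2*L) ≤ A := by
    rw [hAval, div_le_div_iff₀ (by linarith) (by positivity)]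
    linarith [mul_nonneg (mul_nonneg (Real.exp_pos (-β)).le hL0.le)
      (show (0:ℝ) ≤ K - 2 by linarith)]
  have hsplit : Real.exp (-(z*d)) = Real.exp (-d) * Real.exp ((1-z)*d) := by
    rw [← Real.exp_add]; ring_nf
  have hxB : A * (Real.exp 1 * ((1-z)*d)) ≤ x := by
    calc A * (Real.exp 1 * ((1-z)*d)) ≤ A * Real.exp ((1-z)*d) :=
          mul_le_mul_of_nonneg_left (aux_et _) hA0.le
    _ = x := by rw [hxdef, hsplit, hAdef]; ring
  have hL2 : (0:ℝ) < L^2 := by positivity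
  have key : 2*(1-z) + 2*q ≤ (z - q) * x := by
    by_cases hcase : 1 - z ≤ 1/L^2
    · have hstep1 : (1-z)*L^2 ≤ 1 := by
        rw [le_div_iff₀ hL2] at hcase
        exact hcase
      have hstep2 : q*L^2 ≤ 1/4 := by
        have h1 : q*L^2 ≤ (1/(4*K))*K :=
          mul_le_mul hq4 hLK hL2.le (by positivity)
        have h2 : (1/(4*K))*K = 1/4 := by field_simp <;> ring
        linarith
      have hlhs : 2*(1-z) + 2*q ≤ 3/L^2 := by
        rw [le_div_iff₀ hL2]
        linarith [hstep1, hstep2]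
      have hmid : 3/L^2 ≤ a/2 * (Real.exp (-β)/(2*L)) := by
        rw [show a/2 * (Real.exp (-β)/(2*L)) = a*Real.exp (-β)/(4*L) by ring,
          div_le_div_iff₀ hL2 (by positivity)]
        linarith [mul_le_mul_of_nonneg_right hrl hL0.le]
      have hfin : a/2 * (Real.exp (-β)/(2*L)) ≤ (z - q)*x := by
        have h1 : a/2 * (Real.exp (-β)/(2*L)) ≤ (z-q) * A :=
          mul_le_mul hzq hALb (by positivity) hzq0.le
        have h2 : (z-q)*A ≤ (z-q)*x := mul_le_mul_of_nonneg_left hxA hzq0.le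
        linarith
      linarith
    · push_neg at hcase
      have h1z : 0 < 1 - z := lt_trans (by positivity) hcase
      have hq2 : 8*q ≤ σ*(1-z) := by
        have h8q : 8*q ≤ 2/K := by
          have hqK : q*K ≤ 1/4 := by
            have h5 := mul_le_mul_of_nonneg_right hq4 hK0.le
            have h6 : (1/(4*K))*K = 1/4 := by field_simp <;> ring
            linarith
          rw [le_div_iff₀ hK0]
          linarith
        have h2 : 2/K ≤ σ/L^2 := by
          rw [div_le_div_iff₀ hK0 hL2]
          linarith [hLKσ]
        have h3 : σ/L^2 ≤ σ*(1-z) := by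
          have h4 : σ * (1/L^2) ≤ σ * (1-z) :=
            mul_le_mul_of_nonneg_left hcase.le hσ.le
          calc σ/L^2 = σ*(1/L^2) := by ring
          _ ≤ σ*(1-z) := h4
        linarith
      obtain ⟨B, hBdef⟩ : ∃ B : ℝ, B = E * ((K-1)*d/(K*L)) := ⟨_, rfl⟩
      have hB0 : 0 < B := by
        rw [hBdef]
        apply mul_pos hE0
        positivity
      have hxB2 : B * (1-z) ≤ x := by
        have heq : A * (Real.exp 1 * ((1-z)*d)) = B * (1-z) := by
          rw [hAval, hBdef, ← hEe]
          field_simp [hK0.ne', hL0.ne']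
        rw [← heq]
        exact hxB
      have haB : 2 + σ/2 ≤ a * B := by
        have h1 : (K-1)/K ≤ (K-1)*d/(K*L) := by
          rw [div_le_div_iff₀ hK0 (by positivity)]
          linarith [mul_le_mul_of_nonneg_left hdge
            (by positivity : (0:ℝ) ≤ (K-1)*K)]
        have haE0 : 0 ≤ a*E := by positivity
        have h2 : a*E*((K-1)/K) ≤ a*B := by
          calc a*E*((K-1)/K) ≤ a*E*((K-1)*d/(K*L)) :=
                mul_le_mul_of_nonneg_left h1 haE0
          _ = a*B := by rw [hBdef]; ring
        have h3 : 2 + σ/2 ≤ a*E*((K-1)/K) := by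
          rw [haE, show (2+σ)*((K-1)/K) = (2+σ)*(K-1)/K by ring, le_div_iff₀ hK0]
          linarith [h7]
        linarith
      have hqB : q * B ≤ σ/8 := by
        have h1 : B ≤ 2*E := by
          rw [hBdef]
          have h2 : (K-1)*d/(K*L) ≤ 2 := by
            rw [div_le_iff₀ (by positivity)]
            linarith [mul_le_mul (show K-1 ≤ K by linarith) hdle hd0.le hK0.le]
          linarith [mul_le_mul_of_nonneg_left h2 hE0.le]
        have h2 : q*B ≤ (1/(4*K))*(2*E) :=
          mul_le_mul hq4 h1 hB0.le (by positivity)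
        have h3 : (1/(4*K))*(2*E) = E/(2*K) := by ring
        have h4 : E/(2*K) ≤ σ/8 := by
          rw [div_le_div_iff₀ (by linarith) (by norm_num)]
          linarith [h8]
        linarith
      have hc1 : (2 + σ/4)*(1-z) ≤ (z - q)*(B*(1-z)) := by
        have h1 : 2 + σ/4 ≤ (z - q)*B := by
          have h2 : a*B - q*B ≤ (z-q)*B := by
            linarith [mul_le_mul_of_nonneg_right hza hB0.le]

          linarith
        calc (2 + σ/4)*(1-z) ≤ ((z-q)*B)*(1-z) :=
              mul_le_mul_of_nonneg_right h1 h1z.le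
        _ = (z-q)*(B*(1-z)) := by ring
      have hc2 : (z - q)*(B*(1-z)) ≤ (z-q)*x :=
        mul_le_mul_of_nonneg_left hxB2 hzq0.le
      linarith [hq2, hc1, hc2]
  have hfle := aux_f_le x hx
  have h2x : (0:ℝ) < 2 + x := by linarith
  have h6 : 2/(2+x) ≤ z - q := by
    rw [div_le_iff₀ h2x]
    linarith [key]
  have h7' : (1 - Real.exp (-x))/x ≤ z - q := le_trans hfle h6
  rw [hqdef] at h7'
  linarith

lemma seq_part (K : ℝ) (w : ℕ → ℝ) (G : ℝ → ℝ) (hK : 8 ≤ K)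
    (hw0 : w 0 = 1) (hrec : ∀ n, w (n+1) = G (w n))
    (hG0 : ∀ z : ℝ, 0 ≤ G z)
    (hG1 : ∀ z : ℝ, 0 ≤ z → z ≤ 2/K → G z ≤ 9/(5*K))
    (hG2 : ∀ z : ℝ, 2/K ≤ z → z ≤ 1 → G z ≤ z - 1/K^2) :
    Filter.limsup w atTop < 2/K := by
  have hK0 : (0:ℝ) < K := by linarith
  have hyb : ∀ n, 0 ≤ w n := by
    intro n
    cases n with
    | zero => rw [hw0]; norm_num
    | succ n => rw [hrec]; exact hG0 _
  have hyle1 : ∀ n, w n ≤ 1 := by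
    intro n
    induction n with
    | zero => rw [hw0]
    | succ n ih =>
      rw [hrec]
      by_cases hc : w n ≤ 2/K
      · have h1 := hG1 (w n) (hyb n) hc
        have h2 : 9/(5*K) ≤ 1 := by
          rw [div_le_one (by linarith)]
          linarith
        linarith
      · push_neg at hc
        have h1 := hG2 (w n) hc.le ih
        have h2 : (0:ℝ) < 1/K^2 := by positivity
        linarith
  have hexit : ∃ n, w n < 2/K := by
    by_contra hco
    push_neg at hco
    have hdec : ∀ n : ℕ, w n ≤ 1 - n*(1/K^2) := by
      intro n
      induction n with
      | zero => rw [hw0]; simp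
      | succ n ih =>
        rw [hrec]
        have h1 := hG2 (w n) (hco n) (hyle1 n)
        push_cast
        linarith
    obtain ⟨n, hn⟩ := exists_nat_gt (K^2)
    have h1 := hdec n
    have h2 := hco n
    have hK2 : (0:ℝ) < K^2 := by positivity
    have h3 : (1:ℝ) < (n:ℝ)*(1/K^2) := by
      rw [show (n:ℝ)*(1/K^2) = (n:ℝ)/K^2 by ring, lt_div_iff₀ hK2]
      linarith
    have hpos : (0:ℝ) < 2/K := by positivity
    linarith
  obtain ⟨N, hN⟩ := hexit
  have htail : ∀ m : ℕ, w (N+1+m) ≤ 9/(5*K) := by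
    intro m
    induction m with
    | zero =>
      have h0 : N + 1 + 0 = N + 1 := rfl
      rw [h0, hrec]
      exact hG1 _ (hyb N) hN.le
    | succ m ih =>
      have heq : N+1+(m+1) = (N+1+m)+1 := by ring
      rw [heq, hrec]
      apply hG1 _ (hyb _)
      have h95 : 9/(5*K) ≤ 2/K := by
        rw [div_le_div_iff₀ (by linarith) hK0]
        linarith
      linarith
  have hlimsup : Filter.limsup w atTop ≤ 9/(5*K) := by
    apply Filter.limsup_le_of_le
    · exact Filter.isCoboundedUnder_le_of_le atTop (fun n => hyb n)
    · rw [eventually_atTop]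
      refine ⟨N+1, fun n hn => ?_⟩
      obtain ⟨m, rfl⟩ := Nat.exists_eq_add_of_le hn
      exact htail m
  have hfinal : 9/(5*K) < 2/K := by
    rw [div_lt_div_iff₀ (by linarith) hK0]
    linarith
  exact lt_of_le_of_lt hlimsup hfinal

set_option maxHeartbeats 1000000 in
theorem stmt_13 (β : ℝ) (hβ : β < 1 - Real.log 2)
    (D : ℕ → ℝ) (hD : ∀ k, D k = Real.log k + Real.log (Real.log k) + β)
    (p : ℕ → ℝ) (hp0 : ∀ k, 0 ≤ p k)
    (hp : Tendsto (fun k : ℕ => (k : ℝ) * p k) atTop (nhds 0))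
    (g : ℕ → ℝ → ℝ)
    (hg : ∀ k y, g k y = p k +
      (1 - Real.exp (-((k : ℝ) - 1) * Real.exp (-(y * D k))))
        / (((k : ℝ) - 1) * Real.exp (-(y * D k))))
    (y : ℕ → ℕ → ℝ) (hy0 : ∀ k, y k 0 = 1)
    (hyrec : ∀ k n, y k (n + 1) = g k (y k n)) :
    ∀ᶠ k : ℕ in atTop, Filter.limsup (fun n => y k n) atTop < 2 / (k : ℝ) := by
  obtain ⟨E, hEdef⟩ : ∃ E : ℝ, E = Real.exp (1 - β) := ⟨_, rfl⟩
  obtain ⟨a, hadef⟩ : ∃ a : ℝ, a = 1/2 + Real.exp (β - 1) := ⟨_, rfl⟩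
  obtain ⟨σ, hσdef⟩ : ∃ σ : ℝ, σ = E/2 - 1 := ⟨_, rfl⟩
  have hlog2 : 0 < Real.log 2 := Real.log_pos (by norm_num)
  have hE2 : 2 < E := by
    have h2 : (2:ℝ) = Real.exp (Real.log 2) := (Real.exp_log (by norm_num)).symm
    rw [hEdef, h2]
    exact Real.exp_lt_exp.2 (by linarith)
  have hE0 : 0 < E := by linarith
  have hinv : Real.exp (β - 1) * E = 1 := by
    rw [hEdef, ← Real.exp_add]
    ring_nf
    exact Real.exp_zero
  have hσ : 0 < σ := by rw [hσdef]; linarith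
  have ha_half : 1/2 ≤ a := by
    rw [hadef]; have := Real.exp_pos (β - 1); linarith
  have hbE : Real.exp (β - 1) = 1/E := by
    rw [eq_div_iff hE0.ne']; exact hinv
  have ha1 : a < 1 := by
    have h1 : 1/E < 1/2 := by
      rw [div_lt_div_iff₀ hE0 two_pos]; linarith
    rw [hadef, hbE]; linarith
  have ha0 : 0 < a := lt_of_lt_of_le one_half_pos ha_half
  have haE : a * E = 2 + σ := by
    rw [hadef, hσdef]
    have h2 : (1/2 + Real.exp (β - 1)) * E = E/2 + Real.exp (β-1) * E := by ring
    rw [h2, hinv]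
    ring
  have hEe : Real.exp (-β) * Real.exp 1 = E := by
    rw [hEdef, ← Real.exp_add]
    ring_nf
  -- tendsto facts
  have hnat : Tendsto (fun k : ℕ => (k:ℝ)) atTop atTop := tendsto_natCast_atTop_atTop
  have hlogT : Tendsto (fun k : ℕ => Real.log k) atTop atTop :=
    Real.tendsto_log_atTop.comp hnat
  have hloglogT : Tendsto (fun k : ℕ => Real.log (Real.log k)) atTop atTop :=
    Real.tendsto_log_atTop.comp hlogT
  have hDk0 : Tendsto (fun k : ℕ => D k / (k:ℝ)) atTop (nhds 0) := by
    have h1 : Tendsto (fun x : ℝ => Real.log x / x) atTop (nhds 0) := by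
      have := Real.isLittleO_log_id_atTop.tendsto_div_nhds_zero
      simpa using this
    have hlk : Tendsto (fun k : ℕ => Real.log k / (k:ℝ)) atTop (nhds 0) := h1.comp hnat
    have hllk : Tendsto (fun k : ℕ => Real.log (Real.log k) / (k:ℝ)) atTop (nhds 0) := by
      apply squeeze_zero' (g := fun k : ℕ => Real.log k / (k:ℝ))
      · filter_upwards [hloglogT.eventually_ge_atTop 0, hnat.eventually_gt_atTop 0]
          with k h1 h2
        positivity
      · filter_upwards [hlogT.eventually_ge_atTop 1, hnat.eventually_gt_atTop 0]
          with k h1 h2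
        have h3 : Real.log (Real.log k) ≤ Real.log k := by
          have := Real.log_le_sub_one_of_pos (by linarith : (0:ℝ) < Real.log k)
          linarith
        gcongr
      · exact hlk
    have hbk : Tendsto (fun k : ℕ => β / (k:ℝ)) atTop (nhds 0) :=
      tendsto_const_nhds.div_atTop hnat
    have hsum := (hlk.add hllk).add hbk
    simp only [add_zero] at hsum
    apply hsum.congr'
    filter_upwards [eventually_ge_atTop 1] with k hk
    rw [hD k]
    ring
  have hC1 : Tendsto (fun k : ℕ => Real.exp (a * D k) / (k:ℝ)) atTop (nhds 0) := by
    have h1a : 0 < 1 - a := by linarith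
    have hg0 : Tendsto (fun x : ℝ => Real.log x / x ^ (1 - a)) atTop (nhds 0) :=
      (isLittleO_log_rpow_atTop h1a).tendsto_div_nhds_zero
    have hgn : Tendsto (fun k : ℕ => Real.exp (a*β) * (Real.log k / (k:ℝ) ^ (1 - a)))
        atTop (nhds 0) := by
      have := (hg0.comp hnat).const_mul (Real.exp (a*β))
      simpa using this
    apply squeeze_zero' ?_ ?_ hgn
    · filter_upwards [hnat.eventually_gt_atTop 0] with k hk
      positivity
    · filter_upwards [hnat.eventually_ge_atTop 3, hlogT.eventually_ge_atTop 1] with k hk3 hlk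
      have hK0 : (0:ℝ) < k := by linarith
      have hL0 : (0:ℝ) < Real.log k := by linarith
      have hsplit : Real.exp (a * D k) = (k:ℝ)^a * (Real.log k)^a * Real.exp (a*β) := by
        rw [hD k, Real.rpow_def_of_pos hK0, Real.rpow_def_of_pos hL0, ← Real.exp_add,
          ← Real.exp_add]
        ring_nf
      have hLa : (Real.log k)^a ≤ Real.log k := by
        calc (Real.log k)^a ≤ (Real.log k)^(1:ℝ) :=
              Real.rpow_le_rpow_of_exponent_le hlk (by linarith)
        _ = Real.log k := Real.rpow_one _
      have hKa : 0 < (k:ℝ)^a := Real.rpow_pos_of_pos hK0 a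
      have hK1a : 0 < (k:ℝ)^(1-a) := Real.rpow_pos_of_pos hK0 (1-a)
      rw [hsplit, div_le_iff₀ hK0]
      have hq : (k:ℝ)/(k:ℝ)^(1-a) = (k:ℝ)^a := by
        rw [div_eq_iff hK1a.ne', ← Real.rpow_add hK0, show a + (1-a) = 1 by ring,
          Real.rpow_one]
      have hrhs : Real.exp (a*β) * (Real.log k / (k:ℝ)^(1-a)) * k
          = Real.exp (a*β) * Real.log k * ((k:ℝ)/(k:ℝ)^(1-a)) := by ring
      rw [hrhs, hq]
      have hmul := mul_le_mul_of_nonneg_left hLa (mul_pos hKa (Real.exp_pos (a*β))).le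
      linarith [hmul]
  have hC3 : Tendsto (fun k : ℕ => (Real.log k)^2 / (k:ℝ)) atTop (nhds 0) := by
    have h := (Real.isLittleO_pow_log_id_atTop (n := 2)).tendsto_div_nhds_zero
    have := h.comp hnat
    simpa [Function.comp_def] using this
  -- eventually facts
  have ev1 : ∀ᶠ k : ℕ in atTop, (8:ℝ) ≤ (k:ℝ) := hnat.eventually_ge_atTop 8
  have ev2 : ∀ᶠ k : ℕ in atTop, (k:ℝ) * p k ≤ 1/8 :=
    hp.eventually (eventually_le_nhds (by norm_num))
  have ev3 : ∀ᶠ k : ℕ in atTop, Real.exp (2 * (D k / (k:ℝ))) ≤ 5/4 := by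
    have h2 := hDk0.const_mul (2:ℝ)
    rw [mul_zero] at h2
    have h1 : Tendsto (fun k : ℕ => Real.exp (2 * (D k / (k:ℝ)))) atTop (nhds 1) := by
      have := (Real.continuous_exp.tendsto 0).comp h2
      simpa [Function.comp_def] using this
    exact h1.eventually (eventually_le_nhds (by norm_num))
  have ev4 : ∀ᶠ k : ℕ in atTop, Real.exp (a * D k) / (k:ℝ) ≤ 7/16 * a :=
    hC1.eventually (eventually_le_nhds (by linarith))
  have ev5 : ∀ᶠ k : ℕ in atTop, -β ≤ Real.log (Real.log k) := hloglogT.eventually_ge_atTop (-β)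
  have ev6a : ∀ᶠ k : ℕ in atTop, 12 * Real.exp β / a ≤ Real.log k :=
    hlogT.eventually_ge_atTop _
  have ev6b : ∀ᶠ k : ℕ in atTop, 1 ≤ Real.log k := hlogT.eventually_ge_atTop 1
  have ev7 : ∀ᶠ k : ℕ in atTop, 2*(2+σ)/σ ≤ (k:ℝ) := hnat.eventually_ge_atTop _
  have ev8 : ∀ᶠ k : ℕ in atTop, 4*E/σ ≤ (k:ℝ) := hnat.eventually_ge_atTop _
  have ev10a : ∀ᶠ k : ℕ in atTop, (Real.log k)^2/(k:ℝ) ≤ σ/2 :=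
    hC3.eventually (eventually_le_nhds (by linarith))
  have ev10b : ∀ᶠ k : ℕ in atTop, (Real.log k)^2/(k:ℝ) ≤ 1 :=
    hC3.eventually (eventually_le_nhds (by norm_num))
  filter_upwards [ev1, ev2, ev3, ev4, ev5, ev6a, ev6b, ev7, ev8, ev10a, ev10b] with k hK8 hp8
    hev3 hev4 hev5 hev6a hev6b hev7 hev8 hev10a hev10b
  -- fixed k
  have hK0 : (0:ℝ) < (k:ℝ) := by linarith
  have hK1 : (0:ℝ) < (k:ℝ) - 1 := by linarith
  have hL1 : (1:ℝ) ≤ Real.log k := hev6b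
  have hL0 : (0:ℝ) < Real.log k := by linarith
  have hdge : Real.log k ≤ D k := by rw [hD k]; linarith [hev5]
  have hd0 : 0 < D k := by linarith
  have hdle : D k ≤ 2 * Real.log k := by
    have := Real.log_le_sub_one_of_pos hL0
    rw [hD k]; linarith [hβ, hlog2]
  have hP8 : p k ≤ 1/(8*(k:ℝ)) := by
    rw [le_div_iff₀ (by linarith)]
    linarith [hp8]
  have hexpd : Real.exp (-D k) = Real.exp (-β) / ((k:ℝ) * Real.log k) := by
    rw [hD k, show -(Real.log (k:ℝ) + Real.log (Real.log (k:ℝ)) + β)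
      = -Real.log (k:ℝ) + -Real.log (Real.log (k:ℝ)) + -β by ring, Real.exp_add,
      Real.exp_add, Real.exp_neg (Real.log (k:ℝ)), Real.exp_neg (Real.log (Real.log (k:ℝ))),
      Real.exp_log hK0, Real.exp_log hL0]
    field_simp
  have hexp2 : Real.exp (2/(k:ℝ) * D k) ≤ 5/4 := by
    rw [show (2:ℝ)/(k:ℝ) * D k = 2 * (D k/(k:ℝ)) by ring]
    exact hev3
  have hexpa : Real.exp (a * D k) ≤ 7/16 * a * (k:ℝ) := by
    have h2 := hev4
    rw [div_le_iff₀ hK0] at h2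
    linarith
  have hrl : 12 ≤ a * Real.exp (-β) * Real.log k := by
    have hbb : Real.exp β * Real.exp (-β) = 1 := by rw [← Real.exp_add]; simp
    have h := hev6a
    rw [div_le_iff₀ ha0] at h
    linarith [mul_le_mul_of_nonneg_right h (Real.exp_pos (-β)).le, hbb]
  have hLK : (Real.log k)^2 ≤ (k:ℝ) := by
    have h := hev10b
    rw [div_le_one hK0] at h
    exact h
  have hLKσ : 2*(Real.log k)^2 ≤ (k:ℝ)*σ := by
    have h := hev10a
    rw [div_le_iff₀ hK0] at h
    linarith
  have h7 : 2*(2+σ) ≤ σ*(k:ℝ) := by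
    have h := hev7
    rw [div_le_iff₀ hσ] at h
    linarith
  have h8 : 4*E ≤ σ*(k:ℝ) := by
    have h := hev8
    rw [div_le_iff₀ hσ] at h
    linarith
  -- instantiate
  have hG0 : ∀ z : ℝ, 0 ≤ g k z := by
    intro z
    rw [hg k z, neg_mul]
    exact core_nonneg _ _ _ _ hK1 (hp0 k)
  have hG1 : ∀ z : ℝ, 0 ≤ z → z ≤ 2/(k:ℝ) → g k z ≤ 9/(5*(k:ℝ)) := by
    intro z hz0 hz2
    rw [hg k z, neg_mul]
    exact core_G1 _ _ _ hK8 hd0 (hp0 k) hP8 hexp2 z hz0 hz2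
  have hG2 : ∀ z : ℝ, 2/(k:ℝ) ≤ z → z ≤ 1 → g k z ≤ z - 1/(k:ℝ)^2 := by
    intro z hz1 hz2
    rw [hg k z, neg_mul]
    by_cases hza : z ≤ a
    · exact core_G2mid _ _ _ _ hK8 hd0 (hp0 k) hP8 ha_half ha1 hexp2 hexpa z hz1 hza
    · push_neg at hza
      exact core_G2high _ _ _ _ _ _ _ _ hK8 hL1 hdge hdle (hp0 k) hP8 ha_half ha1 hσ hE0
        haE hEe hexpd hrl hLK hLKσ h7 h8 z hza.le hz2
  exact seq_part _ _ _ hK8 (hy0 k) (hyrec k) hG0 hG1 hG2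
end

section
/- Let β* > 1 and D = log k + log log k + β*. Then for all sufficiently large k, the function f(x) = (1 - exp(-xD))^{k-1} - s, with s = s(k) satisfying k·s(k) → 0, satisfies f(1 - 1/log k) > 1 - 1/log k. Consequently the sequence p₀ = 1, p_{n+1} ≥ f(p_n) with f increasing stays above 1 - 1/log k for all n. -/
open Filter

theorem stmt_14 (β : ℝ) (hβ : 1 < β)
    (D : ℕ → ℝ) (hD : ∀ k, D k = Real.log k + Real.log (Real.log k) + β)
    (s : ℕ → ℝ) (hs : Tendsto (fun k : ℕ => (k : ℝ) * s k) atTop (nhds 0))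
    (f : ℕ → ℝ → ℝ)
    (hf : ∀ k x, f k x = (1 - Real.exp (-(x * D k))) ^ (k - 1) - s k) :
    ∀ᶠ k : ℕ in atTop,
      (1 - 1 / Real.log k < f k (1 - 1 / Real.log k)) ∧
      ∀ p : ℕ → ℝ, p 0 = 1 → (∀ n, f k (p n) ≤ p (n + 1)) → Monotone (f k) →
        ∀ n, 1 - 1 / Real.log k ≤ p n := by
  set δ : ℝ := (β - 1) / 2 with hδdef
  have hδ : 0 < δ := by simp only [hδdef]; linarith
  have hexpδ : Real.exp (-δ) < 1 := Real.exp_lt_one_iff.mpr (by linarith)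
  have hlogtend : Tendsto (fun k : ℕ => Real.log k) atTop atTop :=
    Real.tendsto_log_atTop.comp tendsto_natCast_atTop_atTop
  have hA : Tendsto (fun k : ℕ => (Real.log (Real.log k) + β) / Real.log k) atTop (nhds 0) := by
    have h2 : Tendsto (fun t : ℝ => (Real.log t + β) / t) atTop (nhds 0) := by
      have hlog : Tendsto (fun t : ℝ => Real.log t / t) atTop (nhds 0) :=
        Real.isLittleO_log_id_atTop.tendsto_div_nhds_zero
      have hb : Tendsto (fun t : ℝ => β / t) atTop (nhds 0) :=
        tendsto_const_nhds.div_atTop tendsto_id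
      have := hlog.add hb
      simpa [add_div] using this
    exact h2.comp hlogtend
  have hE2 : ∀ᶠ k : ℕ in atTop, (Real.log (Real.log k) + β) / Real.log k < δ :=
    hA.eventually_lt_const hδ
  have hE3 : ∀ᶠ k : ℕ in atTop, (k : ℝ) * s k < 1 - Real.exp (-δ) :=
    hs.eventually_lt_const (by linarith)
  have hE1 : ∀ᶠ k : ℕ in atTop, 3 ≤ k := eventually_ge_atTop 3
  filter_upwards [hE1, hE2, hE3] with k hk3 h2 h3
  have hkR : (3 : ℝ) ≤ (k : ℝ) := by exact_mod_cast hk3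
  have hk0 : (0 : ℝ) < (k : ℝ) := by linarith
  set L : ℝ := Real.log k with hLdef
  have hL1 : 1 ≤ L := by
    rw [hLdef, show (1 : ℝ) = Real.log (Real.exp 1) by simp]
    exact Real.log_le_log (Real.exp_pos 1) (le_trans (le_of_lt Real.exp_one_lt_d9) (by linarith))
  have hL0 : (0 : ℝ) < L := by linarith
  have hA0 : 0 ≤ Real.log L := Real.log_nonneg hL1
  have hLk : L ≤ (k : ℝ) := le_trans (Real.log_le_sub_one_of_pos hk0) (by linarith)
  set A : ℝ := Real.log L with hAdef
  have h2' : A + β < δ * L := (div_lt_iff₀ hL0).mp h2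
  set x : ℝ := 1 - 1 / L with hxdef
  -- key lower bound on x * D k
  have hkey : L + A + δ < x * D k := by
    rw [hD k, ← hLdef, ← hAdef, hxdef]
    have hmul : ((1 - 1 / L) * (L + A + β)) * L = (L - 1) * (L + A + β) := by
      field_simp
    have : (L + A + δ) * L < ((1 - 1 / L) * (L + A + β)) * L := by
      rw [hmul]; nlinarith [hδ, hL0, hL1, hA0, h2']
    exact lt_of_mul_lt_mul_right this (le_of_lt hL0)
  have hxD0 : 0 < x * D k := lt_of_le_of_lt (by linarith) hkey
  set y : ℝ := Real.exp (-(x * D k)) with hydef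
  have hy0 : 0 < y := Real.exp_pos _
  have hy1 : y < 1 := Real.exp_lt_one_iff.mpr (by linarith)
  have hyle : y ≤ Real.exp (-δ) / ((k : ℝ) * L) := by
    have : y ≤ Real.exp (-(L + A + δ)) :=
      Real.exp_le_exp.mpr (by linarith)
    have hek : Real.exp L = (k : ℝ) := Real.exp_log hk0
    have heL : Real.exp A = L := Real.exp_log hL0
    have heq : Real.exp (-(L + A + δ)) = Real.exp (-δ) / ((k : ℝ) * L) := by
      rw [show -(L + A + δ) = -δ - L - A by ring, Real.exp_sub, Real.exp_sub, hek, heL,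
        div_div]
    linarith [heq ▸ this]
  -- Bernoulli
  have hbern : 1 - ((k : ℝ) - 1) * y ≤ (1 - y) ^ (k - 1) := by
    have h := one_add_mul_le_pow (a := -y) (by linarith) (k - 1)
    have hcast : ((k - 1 : ℕ) : ℝ) = (k : ℝ) - 1 := by
      rw [Nat.cast_sub (by omega)]; simp
    calc 1 - ((k : ℝ) - 1) * y = 1 + ((k - 1 : ℕ) : ℝ) * (-y) := by rw [hcast]; ring
      _ ≤ (1 + -y) ^ (k - 1) := h
      _ = (1 - y) ^ (k - 1) := by ring_nf
  have hky : ((k : ℝ) - 1) * y ≤ Real.exp (-δ) / L := by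
    have h1 : ((k : ℝ) - 1) * y ≤ ((k : ℝ) - 1) * (Real.exp (-δ) / ((k : ℝ) * L)) :=
      mul_le_mul_of_nonneg_left hyle (by linarith)
    have hpos : (0 : ℝ) < (k : ℝ) * L := by positivity
    have h2 : ((k : ℝ) - 1) * (Real.exp (-δ) / ((k : ℝ) * L)) ≤ Real.exp (-δ) / L := by
      rw [mul_div_assoc', div_le_div_iff₀ hpos hL0]
      nlinarith [mul_pos (Real.exp_pos (-δ)) hL0]
    linarith
  have hsk : s k < (1 - Real.exp (-δ)) / L := by
    have h1 : s k < (1 - Real.exp (-δ)) / (k : ℝ) := by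
      rw [lt_div_iff₀ hk0]; linarith [mul_comm (s k) (k : ℝ)]
    have h2 : (1 - Real.exp (-δ)) / (k : ℝ) ≤ (1 - Real.exp (-δ)) / L :=
      div_le_div_of_nonneg_left (by linarith) hL0 hLk
    linarith
  have hmain : 1 - 1 / L < f k x := by
    rw [hf k x, ← hydef]
    have h1 : 1 - Real.exp (-δ) / L ≤ (1 - y) ^ (k - 1) := by linarith
    have h2 : (1 - Real.exp (-δ)) / L = 1 / L - Real.exp (-δ) / L := by ring
    linarith [hsk, h2 ▸ hsk]
  refine ⟨hmain, ?_⟩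
  intro p hp0 hps hmono n
  induction n with
  | zero =>
    rw [hp0]
    have h0 : 0 < 1 / L := by positivity
    rw [hxdef]; linarith
  | succ m ih =>
    have : f k x ≤ f k (p m) := hmono ih
    calc 1 - 1 / L ≤ f k x := le_of_lt hmain
      _ ≤ f k (p m) := this
      _ ≤ p (m + 1) := hps m
end
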